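/- Let (X,d) be a metric space and u, v normal upper semicontinuous fuzzy sets in X. Define d̂ on X×[0,1] by d̂((x,α),(y,β)) = max{d(x,y), |α−β|} and H'_end(u,v) the Hausdorff distance between endographs with respect to d̂. Then for p ≥ 1 and any measurable f : [0,1] → [0,∞] with f(α) ≥ H([u]_α, [v]_α) for all α, one has (∫₀¹ f(α)^p dα)^{1/p} ≥ H'_end(u,v)^{1+1/p}. -/

import Mathlib

open Set ENNReal MeasureTheory

variable {X : Type*} [MetricSpace X]

/-- The endograph of a fuzzy set `u`, as a subset of `X × [0,1] ⊆ X × ℝ`.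
Note that the product metric on `X × ℝ` is the max metric
`d̂((x,α),(y,β)) = max (d x y) |α − β|`. -/
def endo (u : X → ℝ) : Set (X × ℝ) := {p | p.2 ∈ Set.Icc (0 : ℝ) 1 ∧ p.2 ≤ u p.1}

open scoped NNReal

lemma aux16 (u v : X → ℝ) (hv01 : ∀ x, v x ∈ Set.Icc (0 : ℝ) 1)
    (p : ℝ) (hp : 1 ≤ p) (f : ℝ → ℝ≥0∞) (hf : Measurable f)
    (hfH : ∀ α ∈ Set.Ioc (0:ℝ) 1,
      EMetric.hausdorffEdist {x | α ≤ u x} {x | α ≤ v x} ≤ f α)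
    (r : ℝ≥0) (hr : (r : ℝ≥0∞) < ⨆ a ∈ endo u, EMetric.infEdist a (endo v)) :
    (r : ℝ≥0∞) ^ (p + 1) ≤ ∫⁻ α in Set.Icc (0 : ℝ) 1, f α ^ p := by
  rcases eq_or_ne r 0 with h0 | h0
  · rw [h0, ENNReal.coe_zero, ENNReal.zero_rpow_of_pos (by linarith)]
    exact zero_le
  obtain ⟨a, ha, hra⟩ : ∃ a ∈ endo u, (r : ℝ≥0∞) < EMetric.infEdist a (endo v) := by
    simpa [lt_iSup_iff] using hr
  obtain ⟨x, t⟩ := a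
  obtain ⟨⟨ht0, ht1⟩, htu⟩ := ha
  have hrpos : (0:ℝ) < r := lt_of_le_of_ne r.coe_nonneg (by exact_mod_cast h0.symm)
  have hxv : ((x, (0:ℝ)) : X × ℝ) ∈ endo v := ⟨⟨le_refl 0, zero_le_one⟩, (hv01 x).1⟩
  have h1 : EMetric.infEdist ((x, t) : X × ℝ) (endo v) ≤ ENNReal.ofReal t := by
    refine le_trans (EMetric.infEdist_le_edist_of_mem hxv) ?_
    rw [Prod.edist_eq, edist_self, edist_dist, Real.dist_eq]
    simp [abs_of_nonneg ht0]
  have htr : (r : ℝ) < t := by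
    have h2 := hra.trans_le h1
    rwa [ENNReal.lt_ofReal_iff_toReal_lt ENNReal.coe_ne_top, ENNReal.coe_toReal] at h2
  have hsub : Set.Ioc (t - (r:ℝ)) t ⊆ Set.Icc (0:ℝ) 1 := by
    intro α hα
    exact ⟨le_of_lt (lt_of_le_of_lt (by linarith) hα.1), hα.2.trans ht1⟩
  have hbound : ∀ α ∈ Set.Ioc (t - (r:ℝ)) t, (r : ℝ≥0∞) ≤ f α := by
    rintro α ⟨hα1, hα2⟩
    have hα0 : (0:ℝ) < α := lt_of_le_of_lt (by linarith) hα1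
    have hαu : x ∈ {x | α ≤ u x} := le_trans hα2 htu
    refine le_trans ?_ (hfH α ⟨hα0, hα2.trans ht1⟩)
    refine le_trans ?_ (EMetric.infEdist_le_hausdorffEdist_of_mem hαu)
    rw [EMetric.le_infEdist]
    intro y hy
    have hyv : ((y, α) : X × ℝ) ∈ endo v := ⟨⟨le_of_lt hα0, hα2.trans ht1⟩, hy⟩
    have h2 : (r : ℝ≥0∞) < edist ((x, t) : X × ℝ) (y, α) :=
      lt_of_lt_of_le hra (EMetric.infEdist_le_edist_of_mem hyv)
    rw [Prod.edist_eq] at h2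
    have h3 : edist t α ≤ (r : ℝ≥0∞) := by
      rw [edist_dist, Real.dist_eq, ← ENNReal.ofReal_coe_nnreal]
      exact ENNReal.ofReal_le_ofReal (by rw [abs_of_nonneg (by linarith)]; linarith)
    have h4 : (r : ℝ≥0∞) < edist x y := by
      rcases lt_max_iff.1 h2 with h | h
      · exact h
      · exact absurd h (not_lt.2 h3)
    exact le_of_lt h4
  have hmeas : Measurable fun α => f α ^ p := hf.pow_const p
  calc (r : ℝ≥0∞) ^ (p + 1)
      = (r : ℝ≥0∞) ^ p * (r : ℝ≥0∞) := by
        rw [ENNReal.rpow_add _ _ (by exact_mod_cast h0) ENNReal.coe_ne_top, ENNReal.rpow_one]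
    _ = (r : ℝ≥0∞) ^ p * volume (Set.Ioc (t - (r:ℝ)) t) := by
        rw [Real.volume_Ioc]
        congr 1
        rw [show t - (t - (r:ℝ)) = (r:ℝ) by ring, ENNReal.ofReal_coe_nnreal]
    _ ≤ ∫⁻ α in Set.Ioc (t - (r:ℝ)) t, f α ^ p := by
        rw [← setLIntegral_const]
        exact setLIntegral_mono hmeas fun α hα =>
          ENNReal.rpow_le_rpow (hbound α hα) (by linarith)
    _ ≤ ∫⁻ α in Set.Icc (0:ℝ) 1, f α ^ p := lintegral_mono_set hsub

/-- For normal upper semicontinuous fuzzy sets `u, v`, `p ≥ 1` and any measurable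
`f : [0,1] → [0,∞]` dominating `α ↦ H([u]_α, [v]_α)`, one has
`(∫₀¹ f^p)^{1/p} ≥ H'_end(u,v)^{1+1/p}`, where `H'_end` is the endograph Hausdorff
distance for the max metric on `X × [0,1]`. -/
theorem stmt_16 (u v : X → ℝ)
    (hu01 : ∀ x, u x ∈ Set.Icc (0 : ℝ) 1) (hv01 : ∀ x, v x ∈ Set.Icc (0 : ℝ) 1)
    (hu : ∀ α ∈ Set.Ioc (0 : ℝ) 1, {x | α ≤ u x}.Nonempty ∧ IsClosed {x | α ≤ u x})
    (hv : ∀ α ∈ Set.Ioc (0 : ℝ) 1, {x | α ≤ v x}.Nonempty ∧ IsClosed {x | α ≤ v x})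
    (p : ℝ) (hp : 1 ≤ p) (f : ℝ → ℝ≥0∞) (hf : Measurable f)
    (hfH : ∀ α : ℝ,
      EMetric.hausdorffEdist
          (if α ≤ 0 then closure {x | 0 < u x} else {x | α ≤ u x})
          (if α ≤ 0 then closure {x | 0 < v x} else {x | α ≤ v x}) ≤ f α) :
    EMetric.hausdorffEdist (endo u) (endo v) ^ (1 + 1 / p) ≤
      (∫⁻ α in Set.Icc (0 : ℝ) 1, f α ^ p) ^ (1 / p) := by
  have hp0 : (0:ℝ) < p := lt_of_lt_of_le one_pos hp
  set I := ∫⁻ α in Set.Icc (0 : ℝ) 1, f α ^ p with hI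
  have hfH' : ∀ α ∈ Set.Ioc (0:ℝ) 1,
      EMetric.hausdorffEdist {x | α ≤ u x} {x | α ≤ v x} ≤ f α := by
    intro α hα
    have := hfH α
    simp only [if_neg (not_le.2 hα.1)] at this
    exact this
  have hfH'' : ∀ α ∈ Set.Ioc (0:ℝ) 1,
      EMetric.hausdorffEdist {x | α ≤ v x} {x | α ≤ u x} ≤ f α := by
    intro α hα
    rw [EMetric.hausdorffEdist, EMetric.hausdorffEdist_comm]
    exact hfH' α hα
  have key : ∀ r : ℝ≥0, (r : ℝ≥0∞) < EMetric.hausdorffEdist (endo u) (endo v) →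
      (r : ℝ≥0∞) ^ (p + 1) ≤ I := by
    intro r hr
    rw [EMetric.hausdorffEdist, EMetric.hausdorffEdist_def, lt_sup_iff] at hr
    rcases hr with hr | hr
    · exact aux16 u v hv01 p hp f hf hfH' r hr
    · exact aux16 v u hu01 p hp f hf hfH'' r hr
  have hp1 : (0:ℝ) < p + 1 := by linarith
  have hmain : EMetric.hausdorffEdist (endo u) (endo v) ≤ I ^ (1 / (p + 1)) := by
    apply ENNReal.le_of_forall_nnreal_lt
    intro r hr
    have h1 : ((r:ℝ≥0∞) ^ (p + 1)) ^ (1 / (p+1)) ≤ I ^ (1 / (p+1)) :=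
      ENNReal.rpow_le_rpow (key r hr) (by positivity)
    rwa [← ENNReal.rpow_mul, mul_one_div, div_self (ne_of_gt hp1), ENNReal.rpow_one] at h1
  calc EMetric.hausdorffEdist (endo u) (endo v) ^ (1 + 1 / p)
      ≤ (I ^ (1 / (p + 1))) ^ (1 + 1 / p) :=
        ENNReal.rpow_le_rpow hmain (by positivity)
    _ = I ^ ((1 / (p + 1)) * (1 + 1 / p)) := by rw [← ENNReal.rpow_mul]
    _ = I ^ (1 / p) := by congr 1; field_simp
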